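/- Let G be a locally compact second countable Hausdorff topological group with left Haar measure μ_G, H ⊆ G a compact subgroup, q : G → G/H the quotient map, H_R and 𝒦 separable complex Hilbert spaces, and Λ the left regular representation (Λ(g)Φ)(g') = Φ(g⁻¹g') on the Bochner space L²(G, μ_G; 𝒦). Suppose W : H_R → L²(G, μ_G; 𝒦) is an isometry whose range projection commutes with the representation: Λ(g) W W* = W W* Λ(g) for all g ∈ G. Then U(g) := W* Λ(g) W defines a strongly continuous unitary representation of G on H_R, and E(X) := W* M_{χ_{q⁻¹(X)}} W defines a POVM on the Borel σ-algebra of G/H which is covariant with respect to U, i.e. E(g·X) = U(g) E(X) U(g)* for all g ∈ G and Borel X ⊆ G/H. -/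

import Mathlib

open MeasureTheory
open scoped ENNReal NNReal Pointwise

local notation "⟪" x ", " y "⟫_ℂ" => @inner ℂ _ _ x y

set_option maxHeartbeats 1000000 in
/-- Let `G` be a locally compact second countable Hausdorff group with left Haar
measure `μ` and `Hsub ⊆ G` a compact subgroup.  Let `Λ` be the left regular representation on
`L²(G,μ;K)` and `Mop X` the multiplication operator by the indicator of `q⁻¹(X)` (both
characterised by a.e. identities of representatives).  If `W : HR → L²(G,μ;K)` is an isometry
whose range projection `W W*` commutes with every `Λ(g)`, then `U(g) := W* Λ(g) W` is a
strongly continuous unitary representation of `G` on `HR` and `E(X) := W* Mop(X) W` is a POVM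
on the Borel sets of `G ⧸ Hsub` which is covariant for `U`. -/
theorem stmt5 {G : Type*} [Group G] [TopologicalSpace G] [IsTopologicalGroup G]
    [LocallyCompactSpace G] [SecondCountableTopology G] [T2Space G]
    [MeasurableSpace G] [BorelSpace G]
    (μ : Measure G) [μ.IsHaarMeasure]
    (Hsub : Subgroup G) (hHsub : IsCompact (Hsub : Set G))
    [MeasurableSpace (G ⧸ Hsub)] [BorelSpace (G ⧸ Hsub)]
    {HR K : Type*}
    [NormedAddCommGroup HR] [InnerProductSpace ℂ HR] [CompleteSpace HR]
    [SecondCountableTopology HR]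
    [NormedAddCommGroup K] [InnerProductSpace ℂ K] [CompleteSpace K]
    [SecondCountableTopology K]
    (Λ : G → (Lp K 2 μ →L[ℂ] Lp K 2 μ))
    (hΛ : ∀ (g : G) (Φ : Lp K 2 μ),
        (Λ g Φ : G → K) =ᵐ[μ] fun g' => Φ (g⁻¹ * g'))
    (Mop : Set (G ⧸ Hsub) → (Lp K 2 μ →L[ℂ] Lp K 2 μ))
    (hMop : ∀ X : Set (G ⧸ Hsub), MeasurableSet X → ∀ Φ : Lp K 2 μ,
        (Mop X Φ : G → K)
          =ᵐ[μ] Set.indicator ((QuotientGroup.mk : G → G ⧸ Hsub) ⁻¹' X) (Φ : G → K))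
    (W : HR →L[ℂ] Lp K 2 μ)
    (hWiso : ∀ ψ : HR, ‖W ψ‖ = ‖ψ‖)
    (hWcomm : ∀ g : G,
        Λ g ∘L (W ∘L ContinuousLinearMap.adjoint W)
          = (W ∘L ContinuousLinearMap.adjoint W) ∘L Λ g)
    (U : G → (HR →L[ℂ] HR))
    (hUdef : ∀ g : G, U g = ContinuousLinearMap.adjoint W ∘L (Λ g ∘L W))
    (E : Set (G ⧸ Hsub) → (HR →L[ℂ] HR))
    (hEdef : ∀ X : Set (G ⧸ Hsub), MeasurableSet X →
        E X = ContinuousLinearMap.adjoint W ∘L (Mop X ∘L W)) :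
    (U 1 = 1) ∧
    (∀ g g' : G, U (g * g') = U g * U g') ∧
    (∀ g : G, U g ∈ unitary (HR →L[ℂ] HR)) ∧
    (∀ ψ : HR, Continuous fun g : G => U g ψ) ∧
    (∀ X : Set (G ⧸ Hsub), MeasurableSet X → (E X).IsPositive) ∧
    (E Set.univ = 1) ∧
    (∀ X : ℕ → Set (G ⧸ Hsub), (∀ i, MeasurableSet (X i)) →
        Pairwise (Function.onFun Disjoint X) →
        ∀ ψ ψ' : HR, HasSum (fun i => ⟪ψ, E (X i) ψ'⟫_ℂ) ⟪ψ, E (⋃ i, X i) ψ'⟫_ℂ) ∧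
    (∀ (g : G) (X : Set (G ⧸ Hsub)), MeasurableSet X →
        E (g • X) = U g * E X * star (U g)) := by
  classical
  set q : G → G ⧸ Hsub := QuotientGroup.mk with hqdef
  have hq : Measurable q := continuous_quotient_mk'.measurable
  -- a.e. composition with left translation
  have haec : ∀ (g : G) {f h : G → K}, f =ᵐ[μ] h →
      (fun x => f (g * x)) =ᵐ[μ] (fun x => h (g * x)) := by
    intro g f h hfh
    exact (measurePreserving_mul_left μ g).quasiMeasurePreserving.ae_eq hfh
  -- group law for Λ
  have hΛmul : ∀ g g' : G, Λ (g * g') = Λ g ∘L Λ g' := by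
    intro g g'
    ext Φ
    refine (hΛ (g * g') Φ).trans (Filter.EventuallyEq.trans ?_ (hΛ g (Λ g' Φ)).symm)
    have h1 : (fun x => (Λ g' Φ : G → K) (g⁻¹ * x)) =ᵐ[μ]
        (fun x => Φ (g'⁻¹ * (g⁻¹ * x))) := haec g⁻¹ (hΛ g' Φ)
    refine Filter.EventuallyEq.trans ?_ h1.symm
    apply Filter.EventuallyEq.of_eq
    funext x
    simp [mul_assoc]
  have hΛone : Λ 1 = 1 := by
    ext Φ
    refine (hΛ 1 Φ).trans ?_
    simp
  -- adjoint of Λ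
  have hcv : ∀ (g : G) (F : G → ℂ), (∫ x, F (g * x) ∂μ) = ∫ y, F y ∂μ := by
    intro g F
    exact (measurePreserving_mul_left μ g).integral_comp
      (MeasurableEquiv.mulLeft g).measurableEmbedding F
  have hΛinner : ∀ (g : G) (Φ Ψ : Lp K 2 μ), ⟪Λ g Φ, Ψ⟫_ℂ = ⟪Φ, Λ g⁻¹ Ψ⟫_ℂ := by
    intro g Φ Ψ
    rw [L2.inner_def, L2.inner_def]
    have h1 : (fun x => (⟪(Λ g Φ : G → K) x, (Ψ : G → K) x⟫_ℂ)) =ᵐ[μ]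
        (fun x => ⟪Φ (g⁻¹ * x), (Ψ : G → K) x⟫_ℂ) := by
      filter_upwards [hΛ g Φ] with x hx; rw [hx]
    have h2 : (fun x => (⟪(Φ : G → K) x, (Λ g⁻¹ Ψ : G → K) x⟫_ℂ)) =ᵐ[μ]
        (fun x => ⟪(Φ : G → K) x, Ψ (g * x)⟫_ℂ) := by
      filter_upwards [hΛ g⁻¹ Ψ] with x hx; rw [hx]; simp
    rw [integral_congr_ae h1, integral_congr_ae h2]
    rw [← hcv g (fun y => ⟪Φ (g⁻¹ * y), (Ψ : G → K) y⟫_ℂ)]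
    simp
  have hΛadj : ∀ g : G, ContinuousLinearMap.adjoint (Λ g) = Λ g⁻¹ := by
    intro g
    symm
    rw [ContinuousLinearMap.eq_adjoint_iff]
    intro x y
    rw [hΛinner g⁻¹ x y, inv_inv]
  -- isometry facts
  have hW1 : ContinuousLinearMap.adjoint W ∘L W = 1 :=
    (W.norm_map_iff_adjoint_comp_self).mp hWiso
  have hW1' : ∀ ψ : HR, ContinuousLinearMap.adjoint W (W ψ) = ψ := by
    intro ψ
    have := ContinuousLinearMap.ext_iff.mp hW1 ψ
    simpa using this
  -- pointwise form of the commutation hypothesis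
  have hcomm' : ∀ (g : G) (Φ : Lp K 2 μ),
      Λ g (W (ContinuousLinearMap.adjoint W Φ))
        = W (ContinuousLinearMap.adjoint W (Λ g Φ)) := by
    intro g Φ
    have := ContinuousLinearMap.ext_iff.mp (hWcomm g) Φ
    simpa using this
  -- U basic laws
  have hU1 : U 1 = 1 := by
    rw [hUdef, hΛone]
    ext ψ
    simpa using hW1' ψ
  have hUmul : ∀ g g' : G, U (g * g') = U g * U g' := by
    intro g g'
    ext ψ
    rw [hUdef, hUdef, hUdef, hΛmul]
    simp only [ContinuousLinearMap.mul_apply, ContinuousLinearMap.comp_apply,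
      ContinuousLinearMap.coe_comp', Function.comp_apply]
    congr 1
    rw [← hcomm' g' (W ψ), hW1' ψ]
  have hUstar : ∀ g : G, star (U g) = U g⁻¹ := by
    intro g
    rw [ContinuousLinearMap.star_eq_adjoint, hUdef, hUdef,
      ContinuousLinearMap.adjoint_comp, ContinuousLinearMap.adjoint_comp,
      ContinuousLinearMap.adjoint_adjoint, hΛadj]
    rfl
  have hUuni : ∀ g : G, U g ∈ unitary (HR →L[ℂ] HR) := by
    intro g
    rw [Unitary.mem_iff, hUstar]
    constructor
    · rw [← hUmul, inv_mul_cancel, hU1]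
    · rw [← hUmul, mul_inv_cancel, hU1]
  -- strong continuity
  have hUcont : ∀ ψ : HR, Continuous fun g : G => U g ψ := by
    intro ψ
    have h2 : (2 : ℝ≥0∞) ≠ ⊤ := by norm_num
    set Φ := W ψ with hΦ
    let Fcm : C(G × G, G) := ⟨fun p => p.1⁻¹ * p.2, by fun_prop⟩
    have hmpc : ∀ g : G, MeasurePreserving (Fcm.curry g) μ μ := by
      intro g
      exact measurePreserving_mul_left μ g⁻¹
    have heq : (fun g : G => Λ g Φ)
        = fun g : G => Lp.compMeasurePreserving (Fcm.curry g) (hmpc g) Φ := by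
      funext g
      apply Lp.ext
      refine (hΛ g Φ).trans (Lp.coeFn_compMeasurePreserving Φ (hmpc g)).symm
    have hcont : Continuous fun g : G => Λ g Φ := by
      rw [heq]
      exact Continuous.compMeasurePreservingLp continuous_const Fcm.curry.continuous hmpc h2
    have : (fun g : G => U g ψ)
        = fun g : G => ContinuousLinearMap.adjoint W (Λ g Φ) := by
      funext g; rw [hUdef]; rfl
    rw [this]
    exact (ContinuousLinearMap.adjoint W).continuous.comp hcont
  -- Mop inner product formulas
  have hminner_r : ∀ (X : Set (G ⧸ Hsub)), MeasurableSet X → ∀ Φ Ψ : Lp K 2 μ,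
      ⟪Φ, Mop X Ψ⟫_ℂ = ∫ x in q ⁻¹' X, ⟪(Φ : G → K) x, (Ψ : G → K) x⟫_ℂ ∂μ := by
    intro X hX Φ Ψ
    rw [L2.inner_def]
    have h1 : (fun x => (⟪(Φ : G → K) x, (Mop X Ψ : G → K) x⟫_ℂ)) =ᵐ[μ]
        fun x => Set.indicator (q ⁻¹' X) (fun y => ⟪(Φ : G → K) y, (Ψ : G → K) y⟫_ℂ) x := by
      filter_upwards [hMop X hX Ψ] with x hx
      rw [hx]
      by_cases hxs : x ∈ q ⁻¹' X <;> simp [Set.indicator_apply, hxs]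
    rw [integral_congr_ae h1, integral_indicator (hq hX)]
  have hminner_l : ∀ (X : Set (G ⧸ Hsub)), MeasurableSet X → ∀ Φ Ψ : Lp K 2 μ,
      ⟪Mop X Φ, Ψ⟫_ℂ = ∫ x in q ⁻¹' X, ⟪(Φ : G → K) x, (Ψ : G → K) x⟫_ℂ ∂μ := by
    intro X hX Φ Ψ
    rw [L2.inner_def]
    have h1 : (fun x => (⟪(Mop X Φ : G → K) x, (Ψ : G → K) x⟫_ℂ)) =ᵐ[μ]
        fun x => Set.indicator (q ⁻¹' X) (fun y => ⟪(Φ : G → K) y, (Ψ : G → K) y⟫_ℂ) x := by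
      filter_upwards [hMop X hX Φ] with x hx
      rw [hx]
      by_cases hxs : x ∈ q ⁻¹' X <;> simp [Set.indicator_apply, hxs]
    rw [integral_congr_ae h1, integral_indicator (hq hX)]
  -- positivity of Mop
  have hMsa : ∀ (X : Set (G ⧸ Hsub)), MeasurableSet X → IsSelfAdjoint (Mop X) := by
    intro X hX
    rw [ContinuousLinearMap.isSelfAdjoint_iff']
    symm
    rw [ContinuousLinearMap.eq_adjoint_iff]
    intro x y
    rw [hminner_l X hX x y, hminner_r X hX x y]
  have hMpos : ∀ (X : Set (G ⧸ Hsub)), MeasurableSet X → (Mop X).IsPositive := by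
    intro X hX
    refine ContinuousLinearMap.isPositive_def'.mpr ⟨hMsa X hX, fun Φ => ?_⟩
    rw [ContinuousLinearMap.reApplyInnerSelf, hminner_l X hX Φ Φ]
    rw [← integral_re ((L2.integrable_inner (𝕜 := ℂ) Φ Φ).restrict)]
    apply integral_nonneg
    intro x
    exact inner_self_nonneg
  -- key formula for E
  have keyE : ∀ (X : Set (G ⧸ Hsub)), MeasurableSet X → ∀ ψ ψ' : HR,
      ⟪ψ, E X ψ'⟫_ℂ = ∫ x in q ⁻¹' X, ⟪(W ψ : G → K) x, (W ψ' : G → K) x⟫_ℂ ∂μ := by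
    intro X hX ψ ψ'
    rw [hEdef X hX]
    simp only [ContinuousLinearMap.comp_apply]
    rw [ContinuousLinearMap.adjoint_inner_right]
    exact hminner_r X hX (W ψ) (W ψ')
  -- positivity of E
  have hEpos : ∀ (X : Set (G ⧸ Hsub)), MeasurableSet X → (E X).IsPositive := by
    intro X hX
    rw [hEdef X hX]
    exact (hMpos X hX).adjoint_conj W
  -- E univ
  have hMuniv : Mop Set.univ = 1 := by
    ext Φ
    refine (hMop Set.univ MeasurableSet.univ Φ).trans ?_
    simp
  have hEuniv : E Set.univ = 1 := by
    rw [hEdef Set.univ MeasurableSet.univ, hMuniv]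
    ext ψ
    simpa using hW1' ψ
  -- countable additivity
  have hEadd : ∀ X : ℕ → Set (G ⧸ Hsub), (∀ i, MeasurableSet (X i)) →
      Pairwise (Function.onFun Disjoint X) →
      ∀ ψ ψ' : HR, HasSum (fun i => ⟪ψ, E (X i) ψ'⟫_ℂ) ⟪ψ, E (⋃ i, X i) ψ'⟫_ℂ := by
    intro X hXm hXd ψ ψ'
    have h1 : ∀ i, ⟪ψ, E (X i) ψ'⟫_ℂ
        = ∫ x in q ⁻¹' (X i), ⟪(W ψ : G → K) x, (W ψ' : G → K) x⟫_ℂ ∂μ :=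
      fun i => keyE (X i) (hXm i) ψ ψ'
    have h2 : ⟪ψ, E (⋃ i, X i) ψ'⟫_ℂ
        = ∫ x in ⋃ i, q ⁻¹' (X i), ⟪(W ψ : G → K) x, (W ψ' : G → K) x⟫_ℂ ∂μ := by
      rw [keyE (⋃ i, X i) (MeasurableSet.iUnion hXm) ψ ψ', Set.preimage_iUnion]
    rw [h2]
    simp_rw [h1]
    exact hasSum_integral_iUnion (fun i => hq (hXm i))
      (fun i j hij => (hXd hij).preimage q)
      (L2.integrable_inner (𝕜 := ℂ) (W ψ) (W ψ')).integrableOn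
  -- covariance
  have hEcov : ∀ (g : G) (X : Set (G ⧸ Hsub)), MeasurableSet X →
      E (g • X) = U g * E X * star (U g) := by
    intro g X hX
    have hsX : MeasurableSet (g • X) := by
      have : g • X = (fun y : G ⧸ Hsub => g⁻¹ • y) ⁻¹' X := by
        rw [Set.preimage_smul, inv_inv]
      rw [this]
      exact (continuous_const_smul (g⁻¹ : G)).measurable hX
    have hpre : ∀ x : G, (x ∈ q ⁻¹' (g • X)) ↔ (g⁻¹ * x ∈ q ⁻¹' X) := by
      intro x
      constructor
      · intro hx
        rcases hx with hx
        have : g⁻¹ • (q x) ∈ X := (Set.mem_smul_set_iff_inv_smul_mem).mp hx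
        exact this
      · intro hx
        have : g⁻¹ • (q x) ∈ X := hx
        exact (Set.mem_smul_set_iff_inv_smul_mem).mpr this
    -- the covariance of Mop
    have hMcov : Mop (g • X) = Λ g ∘L (Mop X ∘L Λ g⁻¹) := by
      ext Φ
      refine (hMop (g • X) hsX Φ).trans ?_
      simp only [ContinuousLinearMap.comp_apply]
      set Ψ := Λ g⁻¹ Φ with hΨdef
      have h4 : (Ψ : G → K) =ᵐ[μ] fun y => Φ (g * y) := by
        refine (hΛ g⁻¹ Φ).trans ?_
        simp
      have h2 : (Mop X Ψ : G → K) =ᵐ[μ]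
          Set.indicator (q ⁻¹' X) (fun y => (Φ : G → K) (g * y)) := by
        refine (hMop X hX Ψ).trans ?_
        filter_upwards [h4] with y hy
        by_cases hys : y ∈ q ⁻¹' X <;> simp [Set.indicator_apply, hys, hy]
      have h3 : (fun x => (Mop X Ψ : G → K) (g⁻¹ * x)) =ᵐ[μ]
          (fun x => Set.indicator (q ⁻¹' X) (fun y => (Φ : G → K) (g * y)) (g⁻¹ * x)) :=
        haec g⁻¹ h2
      have h1 : (Λ g (Mop X Ψ) : G → K) =ᵐ[μ]
          fun x => (Mop X Ψ : G → K) (g⁻¹ * x) := hΛ g (Mop X Ψ)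
      refine Filter.EventuallyEq.trans ?_ (h1.trans h3).symm
      apply Filter.EventuallyEq.of_eq
      funext x
      by_cases hx : x ∈ q ⁻¹' (g • X)
      · have hx' : g⁻¹ * x ∈ q ⁻¹' X := (hpre x).mp hx
        simp [Set.indicator_apply, hx, hx']
      · have hx' : ¬ (g⁻¹ * x ∈ q ⁻¹' X) := fun h => hx ((hpre x).mpr h)
        simp [Set.indicator_apply, hx, hx']
    -- assemble
    rw [hEdef (g • X) hsX, hEdef X hX, hMcov, hUstar, hUdef, hUdef]
    ext ψ
    simp only [ContinuousLinearMap.mul_apply, ContinuousLinearMap.comp_apply,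
      ContinuousLinearMap.coe_comp', Function.comp_apply, ContinuousLinearMap.mul_def]
    rw [← hcomm' g⁻¹ (W ψ), hW1' ψ, hcomm' g (Mop X (Λ g⁻¹ (W ψ))),
      hW1' ((ContinuousLinearMap.adjoint W) (Λ g (Mop X (Λ g⁻¹ (W ψ)))))]
  exact ⟨hU1, hUmul, hUuni, hUcont, hEpos, hEuniv, hEadd, hEcov⟩
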